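/- arXiv:1709.04197 — 2 statements merged into one kernel-verified Lean document; each statement's English description precedes it below -/
import Mathlib

section
/- Let B be a bounded operator on K which commutes with G (B maps Dom(G) into Dom(G) and BGφ = GBφ for φ ∈ Dom(G)). Assume the resolvent set of G contains the imaginary axis and β := sup_{τ∈ℝ} ‖(G+iτ)⁻¹ B‖ < ∞. Then for every ε > 0 and every τ ∈ ℝ, ‖(G − (ε − iτ))⁻¹ B‖ ≤ (1+M)β. -/
/-- Let `G` generate a bounded `C₀`-semigroup on a Hilbert space `K` with
`sup ‖S t‖ ≤ M`, and let `B` be a bounded operator commuting with `G` such that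
`β = sup_τ ‖(G+iτ)⁻¹B‖ < ∞`. Then for every `ε > 0` and `τ ∈ ℝ`,
`‖(G - (ε - iτ))⁻¹ B‖ ≤ (1+M)β`. -/
theorem shifted_resolvent_bound
    {K : Type*} [NormedAddCommGroup K] [InnerProductSpace ℂ K] [CompleteSpace K]
    (dom : Submodule ℂ K) (hdense : Dense (dom : Set K))
    (G : dom →ₗ[ℂ] K)
    -- the semigroup
    (S : ℝ → K →L[ℂ] K)
    (hS0 : S 0 = 1)
    (hSadd : ∀ t s : ℝ, 0 ≤ t → 0 ≤ s → S (t + s) = S t ∘L S s)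
    (hScont : ∀ φ : K, ContinuousOn (fun t => S t φ) (Set.Ici (0:ℝ)))
    -- `G` is its infinitesimal generator
    (hSdom : ∀ φ : dom, ∀ t : ℝ, 0 ≤ t → S t (φ : K) ∈ dom)
    (hSderiv : ∀ φ : dom, ∀ t : ℝ, 0 ≤ t →
      HasDerivWithinAt (fun s : ℝ => S s (φ : K)) (S t (G φ)) (Set.Ici (0:ℝ)) t)
    (hgen : ∀ φ : K, (∃ ψ : K, HasDerivWithinAt (fun s : ℝ => S s φ) ψ (Set.Ici (0:ℝ)) 0)
      → φ ∈ dom)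
    -- boundedness of the semigroup
    (M : ℝ) (hM : ∀ t : ℝ, 0 ≤ t → ‖S t‖ ≤ M)
    -- `B` is a bounded operator commuting with `G`
    (B : K →L[ℂ] K)
    (hBdom : ∀ φ : dom, B (φ : K) ∈ dom)
    (hBcomm : ∀ φ : dom, G ⟨B (φ : K), hBdom φ⟩ = B (G φ))
    -- the imaginary axis is in the resolvent set: `R τ = (G + iτ)⁻¹`
    (R : ℝ → K →L[ℂ] K)
    (hRmem : ∀ (τ : ℝ) (φ : K), R τ φ ∈ dom)
    (hRright : ∀ (τ : ℝ) (φ : K),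
      G ⟨R τ φ, hRmem τ φ⟩ + (Complex.I * (τ : ℂ)) • R τ φ = φ)
    (hRleft : ∀ (τ : ℝ) (φ : dom),
      R τ (G φ + (Complex.I * (τ : ℂ)) • (φ : K)) = φ)
    -- `β = sup_τ ‖(G + iτ)⁻¹ B‖ < ∞`
    (β : ℝ) (hβ : ∀ τ : ℝ, ‖R τ ∘L B‖ ≤ β)
    -- `Rz ε τ = (G - (ε - iτ))⁻¹` for `ε > 0`
    (Rz : ℝ → ℝ → (K →L[ℂ] K))
    (hRzmem : ∀ (ε τ : ℝ), 0 < ε → ∀ φ : K, Rz ε τ φ ∈ dom)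
    (hRzright : ∀ (ε τ : ℝ) (hε : 0 < ε) (φ : K),
      G ⟨Rz ε τ φ, hRzmem ε τ hε φ⟩ - ((ε : ℂ) - Complex.I * (τ : ℂ)) • Rz ε τ φ = φ)
    (hRzleft : ∀ (ε τ : ℝ), 0 < ε → ∀ φ : dom,
      Rz ε τ (G φ - ((ε : ℂ) - Complex.I * (τ : ℂ)) • (φ : K)) = φ) :
    ∀ (ε τ : ℝ), 0 < ε → ‖Rz ε τ ∘L B‖ ≤ (1 + M) * β := by
  intro ε τ hε
  have hM0 : 0 ≤ M := le_trans (norm_nonneg _) (hM 0 le_rfl)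
  have hβ0 : 0 ≤ β := le_trans (norm_nonneg _) (hβ 0)
  set z : ℂ := (ε : ℂ) - Complex.I * (τ : ℂ) with hzdef
  -- Key resolvent bound: ‖Rz ε τ‖ ≤ M / ε, proved via the Laplace transform estimate.
  have key : ∀ (ψ : dom) (χ : K), G ψ - z • (ψ : K) = χ → ‖(ψ : K)‖ ≤ M / ε * ‖χ‖ := by
    intro ψ χ hψ
    set f : ℝ → K := fun t => Complex.exp (-(z * t)) • S t (ψ : K) with hf
    have hf0 : f 0 = (ψ : K) := by simp [hf, hS0]
    have hfd : ∀ t : ℝ, 0 ≤ t →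
        HasDerivWithinAt f (Complex.exp (-(z * t)) • S t χ) (Set.Ici (0:ℝ)) t := by
      intro t ht
      have h1 : HasDerivWithinAt (fun s : ℝ => Complex.exp (-(z * s)))
          (-z * Complex.exp (-(z * t))) (Set.Ici (0:ℝ)) t := by
        have h2 : HasDerivAt (fun s : ℝ => -(z * (s : ℂ))) (-z) t := by
          have := ((Complex.ofRealCLM.hasDerivAt (x := t)).const_mul z).neg
          exact this.congr_deriv (by simp)
        simpa [mul_comm] using (h2.cexp).hasDerivWithinAt
      have h3 := (h1.smul (hSderiv ψ t ht))
      convert h3 using 1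
      · rfl
      rw [← hψ]
      simp only [map_sub, map_smul, smul_sub, smul_smul]
      module
    have hnorm : ∀ T : ℝ, 0 ≤ T → ‖f T - (ψ : K)‖ ≤ M * ‖χ‖ / ε * (1 - Real.exp (-(ε * T))) := by
      intro T hT
      have hcont : ContinuousOn (fun t => f t - (ψ : K)) (Set.Icc 0 T) := by
        apply ContinuousOn.sub _ continuousOn_const
        have hce : Continuous fun t : ℝ => Complex.exp (-(z * t)) :=
          Complex.continuous_exp.comp ((continuous_const.mul Complex.continuous_ofReal).neg)
        exact hce.continuousOn.smul ((hScont (ψ : K)).mono Set.Icc_subset_Ici_self)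
      have hmvt := image_norm_le_of_norm_deriv_right_le_deriv_boundary (a := 0) (b := T)
        (f := fun t => f t - (ψ : K)) (f' := fun t => Complex.exp (-(z * t)) • S t χ)
        hcont
        (fun x hx => ((hfd x hx.1).mono (Set.Ici_subset_Ici.2 hx.1)).sub_const _)
        (B := fun t => M * ‖χ‖ / ε * (1 - Real.exp (-(ε * t))))
        (B' := fun t => M * ‖χ‖ * Real.exp (-(ε * t)))
        (by simp [hf0])
        (fun x => by
          have hB : HasDerivAt (fun t : ℝ => Real.exp (-(ε * t))) (Real.exp (-(ε * x)) * (-ε)) x :=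
            (Real.hasDerivAt_exp _).comp x (by simpa using (hasDerivAt_id x).const_mul (-ε))
          have h4 := (hB.const_sub 1).const_mul (M * ‖χ‖ / ε)
          refine h4.congr_deriv ?_
          have hε0 : ε ≠ 0 := hε.ne'
          simp only [mul_neg, neg_neg]
          rw [div_mul_eq_mul_div, mul_div_assoc, mul_div_cancel_right₀ _ hε0])
        (fun x hx => by
          have h5 : ‖Complex.exp (-(z * x)) • S x χ‖ = Real.exp (-(ε * x)) * ‖S x χ‖ := by
            rw [norm_smul, Complex.norm_exp]
            congr 2
            simp [hzdef]
          rw [h5]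
          have h6 : ‖S x χ‖ ≤ M * ‖χ‖ :=
            le_trans ((S x).le_opNorm χ)
              (mul_le_mul_of_nonneg_right (hM x hx.1) (norm_nonneg _))
          calc Real.exp (-(ε * x)) * ‖S x χ‖ ≤ Real.exp (-(ε * x)) * (M * ‖χ‖) :=
                mul_le_mul_of_nonneg_left h6 (Real.exp_nonneg _)
            _ = M * ‖χ‖ * Real.exp (-(ε * x)) := by ring)
      exact hmvt (Set.right_mem_Icc.2 hT)
    have hbig : ∀ T : ℝ, 0 ≤ T →
        ‖(ψ : K)‖ ≤ Real.exp (-(ε * T)) * (M * ‖(ψ : K)‖) + M * ‖χ‖ / ε := by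
      intro T hT
      have h7 : ‖f T‖ ≤ Real.exp (-(ε * T)) * (M * ‖(ψ : K)‖) := by
        have he : ‖f T‖ = Real.exp (-(ε * T)) * ‖S T (ψ : K)‖ := by
          rw [hf]
          rw [norm_smul, Complex.norm_exp]
          congr 2
          simp [hzdef]
        rw [he]
        refine mul_le_mul_of_nonneg_left ?_ (Real.exp_nonneg _)
        exact le_trans ((S T).le_opNorm _) (mul_le_mul_of_nonneg_right (hM T hT) (norm_nonneg _))
      have h8 : ‖f T - (ψ : K)‖ ≤ M * ‖χ‖ / ε := by
        refine le_trans (hnorm T hT) ?_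
        have h9 : (1 : ℝ) - Real.exp (-(ε * T)) ≤ 1 := by
          have := Real.exp_nonneg (-(ε * T)); linarith
        have h10 : 0 ≤ M * ‖χ‖ / ε := by positivity
        nlinarith
      calc ‖(ψ : K)‖ = ‖f T - (f T - (ψ : K))‖ := by rw [sub_sub_cancel]
        _ ≤ ‖f T‖ + ‖f T - (ψ : K)‖ := norm_sub_le _ _
        _ ≤ _ := add_le_add h7 h8
    have h0 : Filter.Tendsto (fun T : ℝ => Real.exp (-(ε * T))) Filter.atTop (nhds 0) := by
      have : Filter.Tendsto (fun T : ℝ => -(ε * T)) Filter.atTop Filter.atBot := by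
        apply Filter.tendsto_neg_atBot_iff.2
        exact Filter.Tendsto.const_mul_atTop hε Filter.tendsto_id
      exact Real.tendsto_exp_atBot.comp this
    have hlim : Filter.Tendsto
        (fun T : ℝ => Real.exp (-(ε * T)) * (M * ‖(ψ : K)‖) + M * ‖χ‖ / ε)
        Filter.atTop (nhds (M * ‖χ‖ / ε)) := by
      have := (h0.mul_const (M * ‖(ψ : K)‖)).add (tendsto_const_nhds (x := M * ‖χ‖ / ε))
      simpa using this
    have : ‖(ψ : K)‖ ≤ M * ‖χ‖ / ε :=
      ge_of_tendsto hlim (Filter.eventually_atTop.2 ⟨0, hbig⟩)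
    calc ‖(ψ : K)‖ ≤ M * ‖χ‖ / ε := this
      _ = M / ε * ‖χ‖ := by ring
  -- Main estimate via the resolvent identity
  refine ContinuousLinearMap.opNorm_le_bound _ (by positivity) (fun φ => ?_)
  rw [ContinuousLinearMap.comp_apply]
  set φ' : K := B φ with hφ'
  set ψ : K := R τ φ' with hψdef
  have hψmem : ψ ∈ dom := hRmem τ φ'
  have h1 : G ⟨ψ, hψmem⟩ - z • ψ = φ' - (ε : ℂ) • ψ := by
    have hr := hRright τ φ'
    rw [hzdef]
    rw [sub_smul]
    have : G ⟨ψ, hψmem⟩ = φ' - (Complex.I * (τ : ℂ)) • ψ := by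
      rw [← hr]; abel
    rw [this]
    abel
  have h2 : Rz ε τ φ' - (ε : ℂ) • Rz ε τ ψ = ψ := by
    have := hRzleft ε τ hε ⟨ψ, hψmem⟩
    rw [← hzdef] at this
    rw [h1] at this
    rw [map_sub, map_smul] at this
    exact this
  have h3 : ‖Rz ε τ ψ‖ ≤ M / ε * ‖ψ‖ := by
    have := hRzright ε τ hε ψ
    rw [← hzdef] at this
    exact key ⟨Rz ε τ ψ, hRzmem ε τ hε ψ⟩ ψ this
  have hψn : ‖ψ‖ ≤ β * ‖φ‖ := by
    have := (R τ ∘L B).le_opNorm φ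
    rw [ContinuousLinearMap.comp_apply] at this
    exact le_trans this (mul_le_mul_of_nonneg_right (hβ τ) (norm_nonneg _))
  have h4 : ‖Rz ε τ φ'‖ ≤ ‖ψ‖ + ε * ‖Rz ε τ ψ‖ := by
    have : Rz ε τ φ' = ψ + (ε : ℂ) • Rz ε τ ψ := sub_eq_iff_eq_add.1 h2
    rw [this]
    refine le_trans (norm_add_le _ _) ?_
    rw [norm_smul]
    simp [abs_of_pos hε]
  have h5 : ε * ‖Rz ε τ ψ‖ ≤ M * ‖ψ‖ := by
    calc ε * ‖Rz ε τ ψ‖ ≤ ε * (M / ε * ‖ψ‖) := by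
          exact mul_le_mul_of_nonneg_left h3 hε.le
      _ = M * ‖ψ‖ := by field_simp
  calc ‖Rz ε τ φ'‖ ≤ ‖ψ‖ + M * ‖ψ‖ := le_trans h4 (by linarith)
    _ = (1 + M) * ‖ψ‖ := by ring
    _ ≤ (1 + M) * (β * ‖φ‖) := mul_le_mul_of_nonneg_left hψn (by linarith)
    _ = (1 + M) * β * ‖φ‖ := by ring
end

section
/- Assume a satisfies the geometric control condition with constants T > 0 and α > 0, i.e. (1/T)∫₀^T a(x+2tξ) dt ≥ α for all x ∈ ℝ^d and all ξ ∈ S^{d−1}. Then for every η ≥ 1, every x ∈ ℝ^d and every ξ ∈ S^{d−1}, one has (1/T)∫₀^T a_η(x+2tξ) dt ≥ α/2; that is, the functions a_η satisfy the geometric control condition with constants T and α/2 uniformly in η ≥ 1. -/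
open MeasureTheory

noncomputable section

namespace KG

/-- `i`-th partial derivative of a function on `ℝ^d`. -/
def pd {d : ℕ} (f : EuclideanSpace ℝ (Fin d) → ℂ) (i : Fin d)
    (x : EuclideanSpace ℝ (Fin d)) : ℂ :=
  fderiv ℝ f x (EuclideanSpace.single i 1)

/-- The Laplacian, as the sum of the second partial derivatives. -/
def laplacian {d : ℕ} (f : EuclideanSpace ℝ (Fin d) → ℂ)
    (x : EuclideanSpace ℝ (Fin d)) : ℂ :=
  ∑ i : Fin d, fderiv ℝ (pd f i) x (EuclideanSpace.single i 1)

/-- Square of the `L²` norm. -/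
def L2sq {d : ℕ} (f : EuclideanSpace ℝ (Fin d) → ℂ) : ℝ := ∫ x, ‖f x‖ ^ 2

/-- The `L²` norm. -/
def L2norm {d : ℕ} (f : EuclideanSpace ℝ (Fin d) → ℂ) : ℝ := Real.sqrt (L2sq f)

/-- Square of the norm of the gradient at a point. -/
def gradSq {d : ℕ} (f : EuclideanSpace ℝ (Fin d) → ℂ)
    (x : EuclideanSpace ℝ (Fin d)) : ℝ := ∑ i : Fin d, ‖pd f i x‖ ^ 2

/-- Square of the `H¹` norm `‖∇u‖² + m ‖u‖²`. -/
def H1normSq {d : ℕ} (m : ℝ) (f : EuclideanSpace ℝ (Fin d) → ℂ) : ℝ :=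
  (∫ x, gradSq f x) + m * L2sq f

/-- The `H¹` norm. -/
def H1norm {d : ℕ} (m : ℝ) (f : EuclideanSpace ℝ (Fin d) → ℂ) : ℝ :=
  Real.sqrt (H1normSq m f)

/-- The norm of the energy space `𝓗 = H¹ × L²`. -/
def Hnorm {d : ℕ} (m : ℝ) (u v : EuclideanSpace ℝ (Fin d) → ℂ) : ℝ :=
  Real.sqrt (H1normSq m u + L2sq v)

/-- Membership in `L²`. -/
def MemL2 {d : ℕ} (f : EuclideanSpace ℝ (Fin d) → ℂ) : Prop := MemLp f 2 volume

/-- Membership in `H¹` (classical-derivative version). -/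
def MemH1 {d : ℕ} (f : EuclideanSpace ℝ (Fin d) → ℂ) : Prop :=
  Differentiable ℝ f ∧ MemL2 f ∧ ∀ i, MemL2 (pd f i)

/-- Membership in `H²` (classical-derivative version). -/
def MemH2 {d : ℕ} (f : EuclideanSpace ℝ (Fin d) → ℂ) : Prop :=
  ContDiff ℝ 2 f ∧ MemH1 f ∧ MemL2 (laplacian f)

/-- `ℤ^d`-periodicity. -/
def ZdPeriodic {d : ℕ} (a : EuclideanSpace ℝ (Fin d) → ℝ) : Prop :=
  ∀ (x : EuclideanSpace ℝ (Fin d)) (n : Fin d → ℤ),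
    a (x + ∑ i : Fin d, (n i : ℝ) • EuclideanSpace.single i 1) = a x

/-- Time average of `a` along the ray `t ↦ x + 2tξ`. -/
def avg {d : ℕ} (a : EuclideanSpace ℝ (Fin d) → ℝ) (T : ℝ)
    (x ξ : EuclideanSpace ℝ (Fin d)) : ℝ :=
  (1 / T) * ∫ t in (0:ℝ)..T, a (x + (2 * t) • ξ)

/-- The geometric control condition with constants `T` and `α`. -/
def GCC {d : ℕ} (a : EuclideanSpace ℝ (Fin d) → ℝ) (T α : ℝ) : Prop :=
  ∀ x ξ : EuclideanSpace ℝ (Fin d), ‖ξ‖ = 1 → α ≤ avg a T x ξ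

end KG

open KG in
/-- If `a` satisfies the geometric control condition with constants
`T > 0` and `α > 0`, then for every `η ≥ 1` the rescaled damping `a_η(x) = a(ηx)` satisfies
it with constants `T` and `α/2`: `(1/T)∫₀ᵀ a_η(x + 2tξ) dt ≥ α/2` for all `x` and all unit
`ξ`. -/
theorem GCC_uniform_in_eta
    (d : ℕ) (hd : 1 ≤ d)
    (a : EuclideanSpace ℝ (Fin d) → ℝ)
    (ha_cont : Continuous a) (ha_per : ZdPeriodic a)
    (ha_nonneg : ∀ x, 0 ≤ a x) (ha_ne : ∃ x, a x ≠ 0)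
    (T α : ℝ) (hT : 0 < T) (hα : 0 < α) (hGCC : GCC a T α) :
    ∀ η : ℝ, 1 ≤ η → ∀ x ξ : EuclideanSpace ℝ (Fin d), ‖ξ‖ = 1 →
      α / 2 ≤ (1 / T) * ∫ t in (0:ℝ)..T, a (η • (x + (2 * t) • ξ)) := by
  intro η hη x ξ hξ
  have hη0 : (0:ℝ) < η := lt_of_lt_of_le one_pos hη
  set f : ℝ → ℝ := fun s => a (η • x + (2 * s) • ξ) with hf
  have hfc : Continuous f := by
    apply ha_cont.comp
    exact continuous_const.add ((continuous_const.mul continuous_id).smul continuous_const)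
  -- per-block lower bound from GCC
  have hblock : ∀ y : EuclideanSpace ℝ (Fin d),
      α * T ≤ ∫ t in (0:ℝ)..T, a (y + (2 * t) • ξ) := by
    intro y
    have h := hGCC y ξ hξ
    unfold avg at h
    rw [one_div, inv_mul_eq_div, le_div_iff₀ hT] at h
    linarith [h]
  have hblockn : ∀ n : ℕ, α * T ≤ ∫ s in (n * T : ℝ)..((n + 1) * T), f s := by
    intro n
    have := intervalIntegral.integral_comp_add_right (a := (0:ℝ)) (b := T) f (n * T)
    rw [zero_add] at this
    have harg : ∀ s : ℝ, f (s + n * T) = a ((η • x + (2 * (n * T)) • ξ) + (2 * s) • ξ) := by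
      intro s
      simp only [hf]
      congr 1
      rw [add_assoc, ← add_smul]
      ring_nf
    have h0 : (∫ s in (0:ℝ)..T, f (s + n * T))
        = ∫ s in (0:ℝ)..T, a ((η • x + (2 * (n * T)) • ξ) + (2 * s) • ξ) := by
      simp only [harg]
    have h1 := hblock (η • x + (2 * (n * T)) • ξ)
    rw [← h0, this] at h1
    have : T + (n : ℝ) * T = (n + 1) * T := by ring
    rwa [this] at h1
  -- sum over N blocks
  have hint : ∀ u v : ℝ, IntervalIntegrable f volume u v := fun u v =>
    hfc.intervalIntegrable u v
  have hsum : ∀ N : ℕ, α * T * N ≤ ∫ s in (0:ℝ)..(N * T), f s := by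
    intro N
    induction N with
    | zero => simp
    | succ N ih =>
      have hsplit : (∫ s in (0:ℝ)..((N + 1 : ℕ) * T), f s)
          = (∫ s in (0:ℝ)..(N * T), f s) + ∫ s in (N * T : ℝ)..((N + 1 : ℕ) * T), f s := by
        rw [intervalIntegral.integral_add_adjacent_intervals (hint _ _) (hint _ _)]
      have hb := hblockn N
      push_cast at hsplit hb ⊢
      rw [hsplit]
      nlinarith [hb, ih]
  set N : ℕ := ⌊η⌋₊ with hN
  have hN1 : 1 ≤ N := Nat.floor_pos.mpr hη
  have hNη : (N : ℝ) ≤ η := Nat.floor_le (le_of_lt hη0)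
  have hNη2 : η - 1 < (N : ℝ) := Nat.sub_one_lt_floor η
  have h2N : η ≤ 2 * (N : ℝ) := by
    have : (1:ℝ) ≤ (N : ℝ) := by exact_mod_cast hN1
    linarith
  -- rewrite the goal integral
  have harg2 : ∀ t : ℝ, a (η • (x + (2 * t) • ξ)) = f (η * t) := by
    intro t
    simp only [hf, smul_add, smul_smul]
    congr 2
    ring
  have hcomp : (∫ t in (0:ℝ)..T, a (η • (x + (2 * t) • ξ)))
      = η⁻¹ * ∫ s in (0:ℝ)..(η * T), f s := by
    simp only [harg2]
    rw [intervalIntegral.integral_comp_mul_left f (ne_of_gt hη0)]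
    simp [mul_comm]
  have hNT : (N : ℝ) * T ≤ η * T := by nlinarith
  have htail : 0 ≤ ∫ s in ((N : ℝ) * T)..(η * T), f s := by
    apply intervalIntegral.integral_nonneg hNT
    intro s _
    exact ha_nonneg _
  have hsplit2 : (∫ s in (0:ℝ)..(η * T), f s)
      = (∫ s in (0:ℝ)..((N : ℝ) * T), f s) + ∫ s in ((N : ℝ) * T)..(η * T), f s := by
    rw [intervalIntegral.integral_add_adjacent_intervals (hint _ _) (hint _ _)]
  have hI : α * T * N ≤ ∫ s in (0:ℝ)..(η * T), f s := by
    rw [hsplit2]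
    linarith [hsum N]
  rw [hcomp]
  have heq : (1 / T) * (η⁻¹ * ∫ s in (0:ℝ)..(η * T), f s)
      = (∫ s in (0:ℝ)..(η * T), f s) / (T * η) := by
    field_simp
  rw [heq, le_div_iff₀ (mul_pos hT hη0)]
  nlinarith [hI, h2N, mul_pos hα hT]
end
end
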